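/- arXiv:1504.00213 — 3 statements merged into one kernel-verified Lean document; each statement's English description precedes it below -/
import Mathlib

section
/- For each cyclic permutation (i,j,k) of (1,2,3) and each sign ε ∈ {+1,−1}: J_i(I_{jk}^ε) = 0, J_j(I_{jk}^ε) = w^j (I_{jk}^ε − 1/2), and J_k(I_{jk}^ε) = w^k (I_{jk}^ε − 1/2). -/
open scoped TensorProduct

noncomputable section

/-- The standard positive-definite quadratic form on `ℝ³`. -/
abbrev Q3 : QuadraticForm ℝ (Fin 3 → ℝ) :=
  QuadraticMap.weightedSumSquares ℝ (fun _ : Fin 3 => (1 : ℝ))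

/-- The Clifford algebra of 3-dimensional Euclidean space. -/
abbrev Cl3 : Type := CliffordAlgebra Q3

/-- The tensor product of two copies of `Cl3`, as ℝ-algebras. -/
abbrev A3 : Type := Cl3 ⊗[ℝ] Cl3

/-- The generators `e₁, e₂, e₃` (indexed by `Fin 3`). -/
def e (l : Fin 3) : Cl3 := CliffordAlgebra.ι Q3 (Pi.single l 1)

/-- `X_l := e_l ⊗ e_l`. -/
def X (l : Fin 3) : A3 := e l ⊗ₜ[ℝ] e l

/-- `w^i := (e_j e_k) ⊗ 1` for `(i,j,k)` a cyclic permutation of the indices. -/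
def w (i : Fin 3) : A3 := (e (i + 1) * e (i + 2)) ⊗ₜ[ℝ] (1 : Cl3)

/-- The (ℝ-linear) operators `J_l(U) := (1/2)(w^l U − U w^l)`. -/
def J (l : Fin 3) (U : A3) : A3 := (1/2 : ℝ) • (w l * U - U * w l)

/-- Kähler's total angular momentum operator `K+1`. -/
def K1 (U : A3) : A3 := J 0 U * w 0 + J 1 U * w 1 + J 2 U * w 2

/-- The idempotents `I_{ij}^ε := (1/2)(1 + ε X_i X_j)`. -/
def Iem (i j : Fin 3) (ε : ℝ) : A3 := (1/2 : ℝ) • ((1 : A3) + ε • (X i * X j))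

/-- The idempotents `P_l^δ := (1/2)(1 + δ X_l)`. -/
def P (l : Fin 3) (δ : ℝ) : A3 := (1/2 : ℝ) • ((1 : A3) + δ • X l)

lemma e_sq (l : Fin 3) : e l * e l = 1 := by
  rw [e, CliffordAlgebra.ι_sq_scalar]
  simp [QuadraticMap.weightedSumSquares_apply, Pi.single_apply, Finset.sum_ite_eq]

lemma e_anticomm {l m : Fin 3} (h : l ≠ m) : e l * e m = -(e m * e l) := by
  have := CliffordAlgebra.ι_mul_ι_add_swap (Q := Q3) (Pi.single l 1) (Pi.single m 1)
  have hp : QuadraticMap.polar Q3 (Pi.single l 1) (Pi.single m 1) = 0 := by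
    simp [QuadraticMap.polar, QuadraticMap.weightedSumSquares_apply, Pi.single_apply,
      Finset.sum_ite_eq, Pi.add_apply]
    rw [Finset.sum_eq_add_of_mem l m (Finset.mem_univ _) (Finset.mem_univ _) h (by intro c hc h2; simp [h2.1, h2.2])]
    simp [h, h.symm]
  rw [hp] at this
  simp only [map_zero] at this
  rw [e, e]
  exact eq_neg_of_add_eq_zero_left this


/-- For each cyclic permutation `(i,j,k)` and each sign `ε`:
`J_i(I_{jk}^ε) = 0`, `J_j(I_{jk}^ε) = w^j (I_{jk}^ε − 1/2)`, and
`J_k(I_{jk}^ε) = w^k (I_{jk}^ε − 1/2)`. -/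
theorem stmt2 (i j k : Fin 3) (hj : j = i + 1) (hk : k = i + 2)
    (ε : ℝ) (hε : ε = 1 ∨ ε = -1) :
    J i (Iem j k ε) = 0 ∧
    J j (Iem j k ε) = w j * (Iem j k ε - (1/2 : ℝ) • (1 : A3)) ∧
    J k (Iem j k ε) = w k * (Iem j k ε - (1/2 : ℝ) • (1 : A3)) := by
  subst hj hk
  have h11 : i + 1 + 1 = i + 2 := by revert i; decide
  have h12 : i + 1 + 2 = i := by revert i; decide
  have h21 : i + 2 + 1 = i := by revert i; decide
  have h22 : i + 2 + 2 = i + 1 := by revert i; decide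
  have d01 : i ≠ i + 1 := by revert i; decide
  have d02 : i ≠ i + 2 := by revert i; decide
  have d12 : (i + 1 : Fin 3) ≠ i + 2 := by revert i; decide
  set a := e i with ha
  set b := e (i+1) with hb
  set c := e (i+2) with hc
  have haa : a * a = 1 := e_sq i
  have hbb : b * b = 1 := e_sq (i+1)
  have hcc : c * c = 1 := e_sq (i+2)
  have hab : a * b = -(b * a) := e_anticomm d01
  have hac : a * c = -(c * a) := e_anticomm d02
  have hbc : b * c = -(c * b) := e_anticomm d12
  have hwi : w i = (b * c) ⊗ₜ[ℝ] (1 : Cl3) := rfl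
  have hwj : w (i+1) = (c * a) ⊗ₜ[ℝ] (1 : Cl3) := by rw [w, h11, h12]
  have hwk : w (i+2) = (a * b) ⊗ₜ[ℝ] (1 : Cl3) := by rw [w, h21, h22]
  have hY : X (i+1) * X (i+2) = (b * c) ⊗ₜ[ℝ] (b * c) := by
    rw [X, X, Algebra.TensorProduct.tmul_mul_tmul]
  have hba : b * a = -(a * b) := by rw [hab, neg_neg]
  have hca : c * a = -(a * c) := by rw [hac, neg_neg]
  have hcb : c * b = -(b * c) := by rw [hbc, neg_neg]
  have hba' : ∀ z : Cl3, b * (a * z) = -(a * (b * z)) := fun z => by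
    rw [← mul_assoc, hba, neg_mul, mul_assoc]
  have hca' : ∀ z : Cl3, c * (a * z) = -(a * (c * z)) := fun z => by
    rw [← mul_assoc, hca, neg_mul, mul_assoc]
  have hcb' : ∀ z : Cl3, c * (b * z) = -(b * (c * z)) := fun z => by
    rw [← mul_assoc, hcb, neg_mul, mul_assoc]
  have haa' : ∀ z : Cl3, a * (a * z) = z := fun z => by rw [← mul_assoc, haa, one_mul]
  have hbb' : ∀ z : Cl3, b * (b * z) = z := fun z => by rw [← mul_assoc, hbb, one_mul]
  have hcc' : ∀ z : Cl3, c * (c * z) = z := fun z => by rw [← mul_assoc, hcc, one_mul]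
  have p1 : (c * a) * (b * c) = a * b := by
    simp only [mul_assoc, hba, hca, hcb, hba', hca', hcb', haa, hbb, hcc, haa', hbb', hcc',
      mul_neg, neg_mul, neg_neg, mul_one, one_mul]
  have p2 : (b * c) * (c * a) = -(a * b) := by
    simp only [mul_assoc, hba, hca, hcb, hba', hca', hcb', haa, hbb, hcc, haa', hbb', hcc',
      mul_neg, neg_mul, neg_neg, mul_one, one_mul]
  have p3 : (a * b) * (b * c) = a * c := by
    simp only [mul_assoc, hba, hca, hcb, hba', hca', hcb', haa, hbb, hcc, haa', hbb', hcc',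
      mul_neg, neg_mul, neg_neg, mul_one, one_mul]
  have p4 : (b * c) * (a * b) = -(a * c) := by
    simp only [mul_assoc, hba, hca, hcb, hba', hca', hcb', haa, hbb, hcc, haa', hbb', hcc',
      mul_neg, neg_mul, neg_neg, mul_one, one_mul]
  have p0 : (b * c) * (b * c) = -1 := by
    simp only [mul_assoc, hba, hca, hcb, hba', hca', hcb', haa, hbb, hcc, haa', hbb', hcc',
      mul_neg, neg_mul, neg_neg, mul_one, one_mul]
  refine ⟨?_, ?_, ?_⟩
  · rw [J, Iem, hY, hwi]
    simp only [mul_add, add_mul, mul_one, one_mul, mul_smul_comm, smul_mul_assoc,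
      Algebra.TensorProduct.tmul_mul_tmul, p0, mul_one, one_mul]
    module
  · rw [J, Iem, hY, hwj]
    simp only [mul_add, add_mul, mul_one, one_mul, mul_smul_comm, smul_mul_assoc, smul_add,
      smul_sub, mul_sub, sub_mul, Algebra.TensorProduct.tmul_mul_tmul, TensorProduct.neg_tmul, TensorProduct.tmul_neg, p1, p2, mul_one, one_mul]
    module
  · rw [J, Iem, hY, hwk]
    simp only [mul_add, add_mul, mul_one, one_mul, mul_smul_comm, smul_mul_assoc, smul_add,
      smul_sub, mul_sub, sub_mul, Algebra.TensorProduct.tmul_mul_tmul, TensorProduct.neg_tmul, TensorProduct.tmul_neg, p3, p4, mul_one, one_mul]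
    module
end
end

section
/- Set dr := X₁ + X₂ + X₃, and let (𝒳₁,…,𝒳₈) := (I_{12}^{+}P₁^{+}, I_{12}^{+}P₁^{−}, I_{12}^{−}P₁^{+}, I_{12}^{−}P₁^{−}, I_{12}^{+}P₃^{+}, I_{12}^{+}P₃^{−}, I_{12}^{−}P₃^{+}, I_{12}^{−}P₃^{−}). Let λ₁,…,λ₈ ∈ ℝ satisfy λ₄ = λ₃, λ₅ = −(3λ₁ + λ₂)/4, λ₆ = −(λ₁ + 3λ₂)/4, λ₇ = (3/4)(λ₁ − λ₂) − λ₃, and λ₈ = −(3/4)(λ₁ − λ₂) − λ₃. Then (K+1)(dr · Σ_{A=1}^{8} λ_A 𝒳_A) = 0. -/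
open scoped TensorProduct

noncomputable section

/-- The eight idempotents `𝒳₁,…,𝒳₈` of Table 1. -/
def XA : Fin 8 → A3 :=
  ![Iem 0 1 1 * P 0 1, Iem 0 1 1 * P 0 (-1),
    Iem 0 1 (-1) * P 0 1, Iem 0 1 (-1) * P 0 (-1),
    Iem 0 1 1 * P 2 1, Iem 0 1 1 * P 2 (-1),
    Iem 0 1 (-1) * P 2 1, Iem 0 1 (-1) * P 2 (-1)]


lemma ee_same (i : Fin 3) : e i * e i = 1 := by
  rw [e, CliffordAlgebra.ι_sq_scalar]
  have h : Q3 (Pi.single i 1) = 1 := by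
    simp [Q3, QuadraticMap.weightedSumSquares_apply, Pi.single_apply, Fin.sum_univ_three]
  rw [h, map_one]

lemma ee_swap {i j : Fin 3} (h : i ≠ j) : e i * e j = -(e j * e i) := by
  have hp := CliffordAlgebra.ι_mul_ι_add_swap (Q := Q3) (Pi.single i (1:ℝ)) (Pi.single j 1)
  have h0 : QuadraticMap.polar Q3 (Pi.single i (1:ℝ)) (Pi.single j 1) = 0 := by
    simp [QuadraticMap.polar, Q3, QuadraticMap.weightedSumSquares_apply, Pi.single_apply,
      Fin.sum_univ_three]
    fin_cases i <;> fin_cases j <;> simp_all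
  rw [h0, map_zero] at hp
  rw [e, e]
  exact eq_neg_of_add_eq_zero_left hp

lemma X_sq (i : Fin 3) : X i * X i = 1 := by
  rw [X, Algebra.TensorProduct.tmul_mul_tmul, ee_same, Algebra.TensorProduct.one_def]

lemma X_comm (i j : Fin 3) : X i * X j = X j * X i := by
  rcases eq_or_ne i j with rfl | h
  · rfl
  · rw [X, X, Algebra.TensorProduct.tmul_mul_tmul, Algebra.TensorProduct.tmul_mul_tmul,
      ee_swap h, TensorProduct.neg_tmul, TensorProduct.tmul_neg, neg_neg]

lemma X_sq' (i : Fin 3) (t : A3) : X i * (X i * t) = t := by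
  rw [← mul_assoc, X_sq, one_mul]

lemma sw10 : X 1 * X 0 = X 0 * X 1 := X_comm 1 0
lemma sw20 : X 2 * X 0 = X 0 * X 2 := X_comm 2 0
lemma sw21 : X 2 * X 1 = X 1 * X 2 := X_comm 2 1
lemma sw10' (t : A3) : X 1 * (X 0 * t) = X 0 * (X 1 * t) := by
  rw [← mul_assoc, sw10, mul_assoc]
lemma sw20' (t : A3) : X 2 * (X 0 * t) = X 0 * (X 2 * t) := by
  rw [← mul_assoc, sw20, mul_assoc]
lemma sw21' (t : A3) : X 2 * (X 1 * t) = X 1 * (X 2 * t) := by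
  rw [← mul_assoc, sw21, mul_assoc]

lemma XA0 : XA 0 = Iem 0 1 1 * P 0 1 := rfl
lemma XA1 : XA 1 = Iem 0 1 1 * P 0 (-1) := rfl
lemma XA2 : XA 2 = Iem 0 1 (-1) * P 0 1 := rfl
lemma XA3 : XA 3 = Iem 0 1 (-1) * P 0 (-1) := rfl
lemma XA4 : XA 4 = Iem 0 1 1 * P 2 1 := rfl
lemma XA5 : XA 5 = Iem 0 1 1 * P 2 (-1) := rfl
lemma XA6 : XA 6 = Iem 0 1 (-1) * P 2 1 := rfl
lemma XA7 : XA 7 = Iem 0 1 (-1) * P 2 (-1) := rfl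

lemma key17 (lam : Fin 8 → ℝ)
    (h4 : lam 3 = lam 2)
    (h5 : lam 4 = -(3 * lam 0 + lam 1) / 4)
    (h6 : lam 5 = -(lam 0 + 3 * lam 1) / 4)
    (h7 : lam 6 = (3/4) * (lam 0 - lam 1) - lam 2)
    (h8 : lam 7 = -(3/4) * (lam 0 - lam 1) - lam 2) :
    (X 0 + X 1 + X 2) * ∑ A : Fin 8, lam A • XA A
      = ((3/4) * (lam 0 - lam 1)) • 1 := by
  simp only [Fin.sum_univ_eight, XA0, XA1, XA2, XA3, XA4, XA5, XA6, XA7, Iem, P,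
    h4, h5, h6, h7, h8]
  simp only [smul_add, smul_smul, mul_add, add_mul, mul_one, one_mul, mul_smul_comm,
    smul_mul_assoc, mul_assoc]
  simp only [X_sq, X_sq', sw10, sw20, sw21, sw10', sw20', sw21', mul_one, one_mul]
  match_scalars <;> ring

lemma J_smul_one (l : Fin 3) (c : ℝ) : J l (c • 1) = 0 := by
  simp [J, mul_smul_comm, smul_mul_assoc]

lemma K1_smul_one (c : ℝ) : K1 (c • 1) = 0 := by
  simp [K1, J_smul_one]

/-- If `λ₄ = λ₃`, `λ₅ = −(3λ₁+λ₂)/4`, `λ₆ = −(λ₁+3λ₂)/4`,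
`λ₇ = (3/4)(λ₁−λ₂) − λ₃`, `λ₈ = −(3/4)(λ₁−λ₂) − λ₃`, then
`(K+1)(dr · Σ λ_A 𝒳_A) = 0`, where `dr := X₁ + X₂ + X₃`. -/
theorem stmt17 (lam : Fin 8 → ℝ)
    (h4 : lam 3 = lam 2)
    (h5 : lam 4 = -(3 * lam 0 + lam 1) / 4)
    (h6 : lam 5 = -(lam 0 + 3 * lam 1) / 4)
    (h7 : lam 6 = (3/4) * (lam 0 - lam 1) - lam 2)
    (h8 : lam 7 = -(3/4) * (lam 0 - lam 1) - lam 2) :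
    K1 ((X 0 + X 1 + X 2) * ∑ A : Fin 8, lam A • XA A) = 0 := by
  rw [key17 lam h4 h5 h6 h7 h8, K1_smul_one]
end
end

section
/- Kähler's identity for the total angular momentum operator holds algebraically: for every U ∈ A, (K+1)((K+1)(U)) = −(J₁(J₁(U)) + J₂(J₂(U)) + J₃(J₃(U))) + (K+1)(U). -/
open scoped TensorProduct

noncomputable section

set_option linter.unusedVariables false

lemma Lself {a b : Fin 3} (hab : a ≠ b) : (e a * e b) * (e a * e b) = -1 := by
  rw [mul_assoc, ← mul_assoc (e b), e_anticomm hab.symm, neg_mul, mul_neg,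
    mul_assoc (e a) (e b), e_sq, mul_one, e_sq]

lemma L1 {a b c : Fin 3} (hab : a ≠ b) (hac : a ≠ c) :
    (e a * e b) * (e b * e c) = -(e c * e a) := by
  rw [mul_assoc, ← mul_assoc (e b), e_sq, one_mul, e_anticomm hac]

lemma L2 {a b c : Fin 3} (hab : a ≠ b) (hbc : b ≠ c) (hac : a ≠ c) :
    (e a * e b) * (e c * e a) = e b * e c := by
  rw [e_anticomm hac.symm, mul_neg, mul_assoc, ← mul_assoc (e b), e_anticomm hab.symm,
    neg_mul, mul_neg, neg_neg, ← mul_assoc, ← mul_assoc, e_sq, one_mul]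

lemma neg_one_tmul_one : (-1 : Cl3) ⊗ₜ[ℝ] (1 : Cl3) = (-1 : A3) := by
  rw [TensorProduct.neg_tmul, ← Algebra.TensorProduct.one_def]

lemma w0_def : w 0 = (e 1 * e 2) ⊗ₜ[ℝ] 1 := rfl
lemma w1_def : w 1 = (e 2 * e 0) ⊗ₜ[ℝ] 1 := rfl
lemma w2_def : w 2 = (e 0 * e 1) ⊗ₜ[ℝ] 1 := rfl

lemma ww00 : w 0 * w 0 = -1 := by
  rw [w0_def, Algebra.TensorProduct.tmul_mul_tmul, mul_one, Lself (by decide),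
    neg_one_tmul_one]
lemma ww11 : w 1 * w 1 = -1 := by
  rw [w1_def, Algebra.TensorProduct.tmul_mul_tmul, mul_one, Lself (by decide),
    neg_one_tmul_one]
lemma ww22 : w 2 * w 2 = -1 := by
  rw [w2_def, Algebra.TensorProduct.tmul_mul_tmul, mul_one, Lself (by decide),
    neg_one_tmul_one]
lemma ww01 : w 0 * w 1 = -w 2 := by
  rw [w0_def, w1_def, w2_def, Algebra.TensorProduct.tmul_mul_tmul, mul_one,
    L1 (by decide) (by decide), TensorProduct.neg_tmul]
lemma ww12 : w 1 * w 2 = -w 0 := by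
  rw [w0_def, w1_def, w2_def, Algebra.TensorProduct.tmul_mul_tmul, mul_one,
    L1 (by decide) (by decide), TensorProduct.neg_tmul]
lemma ww20 : w 2 * w 0 = -w 1 := by
  rw [w0_def, w1_def, w2_def, Algebra.TensorProduct.tmul_mul_tmul, mul_one,
    L1 (by decide) (by decide), TensorProduct.neg_tmul]
lemma ww10 : w 1 * w 0 = w 2 := by
  rw [w0_def, w1_def, w2_def, Algebra.TensorProduct.tmul_mul_tmul, mul_one,
    L2 (by decide) (by decide) (by decide)]
lemma ww21 : w 2 * w 1 = w 0 := by
  rw [w0_def, w1_def, w2_def, Algebra.TensorProduct.tmul_mul_tmul, mul_one,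
    L2 (by decide) (by decide) (by decide)]
lemma ww02 : w 0 * w 2 = w 1 := by
  rw [w0_def, w1_def, w2_def, Algebra.TensorProduct.tmul_mul_tmul, mul_one,
    L2 (by decide) (by decide) (by decide)]

lemma ww00' (x : A3) : w 0 * (w 0 * x) = -x := by rw [← mul_assoc, ww00, neg_mul, one_mul]
lemma ww11' (x : A3) : w 1 * (w 1 * x) = -x := by rw [← mul_assoc, ww11, neg_mul, one_mul]
lemma ww22' (x : A3) : w 2 * (w 2 * x) = -x := by rw [← mul_assoc, ww22, neg_mul, one_mul]
lemma ww01' (x : A3) : w 0 * (w 1 * x) = -(w 2 * x) := by rw [← mul_assoc, ww01, neg_mul]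
lemma ww12' (x : A3) : w 1 * (w 2 * x) = -(w 0 * x) := by rw [← mul_assoc, ww12, neg_mul]
lemma ww20' (x : A3) : w 2 * (w 0 * x) = -(w 1 * x) := by rw [← mul_assoc, ww20, neg_mul]
lemma ww10' (x : A3) : w 1 * (w 0 * x) = w 2 * x := by rw [← mul_assoc, ww10]
lemma ww21' (x : A3) : w 2 * (w 1 * x) = w 0 * x := by rw [← mul_assoc, ww21]
lemma ww02' (x : A3) : w 0 * (w 2 * x) = w 1 * x := by rw [← mul_assoc, ww02]

/-- Kähler's identity `(K+1)² U = −Σ_l J_l² U + (K+1) U`, algebraically. -/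
theorem stmt19 (U : A3) :
    K1 (K1 U) = -(J 0 (J 0 U) + J 1 (J 1 U) + J 2 (J 2 U)) + K1 U := by
  simp only [K1, J, smul_sub, sub_mul, mul_sub, smul_mul_assoc, mul_smul_comm, smul_add,
    add_mul, mul_add, mul_assoc, smul_neg, neg_add_rev,
    ww00, ww11, ww22, ww01, ww12, ww20, ww10, ww21, ww02,
    ww00', ww11', ww22', ww01', ww12', ww20', ww10', ww21', ww02',
    mul_neg_one, neg_one_mul, mul_neg, neg_mul, mul_one, one_mul, neg_neg]
  module
end
end
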